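/- The sequence c_n = s_3(RT_{2,n}) of staircase words on the 2×n rectangle-triangular graph over alphabet {1,2,3} satisfies c_1 = 7, c_2 = 33, c_3 = 161, and c_{n+3} = 4·c_{n+2} + 4·c_{n+1} + c_n for all n ≥ 1. -/

import Mathlib

/-- A word `w` on vertex type `V` (values in `Fin k`, thought of as `1..k`)
is *staircase* w.r.t. an adjacency relation if adjacent vertices get values
differing by at most 1. -/
def IsStaircase {V : Type*} (Adj : V → V → Prop) {k : ℕ} (w : V → Fin k) : Prop :=
  ∀ u v, Adj u v → |(w u : ℤ) - (w v : ℤ)| ≤ 1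

/-- Adjacency of the grid graph `P_2 × P_n` on `{1,2} × {1,...,n}`. -/
def gridAdj {n : ℕ} (u v : Fin 2 × Fin n) : Prop :=
  |(u.1 : ℤ) - (v.1 : ℤ)| + |(u.2 : ℤ) - (v.2 : ℤ)| = 1

/-- Adjacency of the rectangle-triangular graph `RT_{2,n}`. -/
def rtAdj {n : ℕ} (u v : Fin 2 × Fin n) : Prop :=
  gridAdj u v ∨ (u.1 = 0 ∧ v.1 = 1 ∧ (v.2 : ℤ) = (u.2 : ℤ) + 1)
    ∨ (u.1 = 1 ∧ v.1 = 0 ∧ (v.2 : ℤ) = (u.2 : ℤ) - 1)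

/-- Adjacency of the king's graph `KG_{2,n}`. -/
def kingAdj {n : ℕ} (u v : Fin 2 × Fin n) : Prop :=
  u ≠ v ∧ |(u.1 : ℤ) - (v.1 : ℤ)| ≤ 1 ∧ |(u.2 : ℤ) - (v.2 : ℤ)| ≤ 1

/-- `scount k n Adj` is the number of staircase words over alphabet `[k]`
on the `2 × n` vertex set with adjacency `Adj`. -/
noncomputable def scount (k n : ℕ) (Adj : Fin 2 × Fin n → Fin 2 × Fin n → Prop) : ℕ :=
  Nat.card {w : Fin 2 × Fin n → Fin k // IsStaircase Adj w}

/-- `scountIJ k n Adj i j` is the number of staircase words over `[k]` on the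
`2 × (n+1)` vertex set whose first column is `(i, j)` (values `1`-based;
it is `0` if `i` or `j` lies outside `{1,...,k}`). -/
noncomputable def scountIJ (k n : ℕ) (Adj : Fin 2 × Fin (n + 1) → Fin 2 × Fin (n + 1) → Prop)
    (i j : ℕ) : ℕ :=
  Nat.card {w : Fin 2 × Fin (n + 1) → Fin k //
    IsStaircase Adj w ∧ ((w (0, 0) : ℕ) + 1 = i) ∧ ((w (1, 0) : ℕ) + 1 = j)}

-- case analysis of rtAdj edges
lemma rtAdj_cases {n : ℕ} {u v : Fin 2 × Fin n} (h : rtAdj u v) :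
    ((u.2 : ℕ) = (v.2 : ℕ) ∧ (u.1 : ℕ) ≠ (v.1 : ℕ)) ∨
    ((v.2 : ℕ) = (u.2 : ℕ) + 1 ∧ ((u.1 : ℕ) = (v.1 : ℕ) ∨ ((u.1 : ℕ) = 0 ∧ (v.1 : ℕ) = 1))) ∨
    ((u.2 : ℕ) = (v.2 : ℕ) + 1 ∧ ((u.1 : ℕ) = (v.1 : ℕ) ∨ ((u.1 : ℕ) = 1 ∧ (v.1 : ℕ) = 0))) := by
  have hu := u.1.isLt; have hv := v.1.isLt
  rcases h with h | ⟨h1, h2, h3⟩ | ⟨h1, h2, h3⟩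
  · unfold gridAdj at h
    rcases abs_cases ((u.1 : ℤ) - (v.1 : ℤ)) with ⟨e1, _⟩ | ⟨e1, _⟩ <;>
      rcases abs_cases ((u.2 : ℤ) - (v.2 : ℤ)) with ⟨e2, _⟩ | ⟨e2, _⟩ <;>
      rw [e1, e2] at h <;> omega
  · have h1' : (u.1 : ℕ) = 0 := by rw [h1]; rfl
    have h2' : (v.1 : ℕ) = 1 := by rw [h2]; rfl
    right; left; exact ⟨by omega, Or.inr ⟨h1', h2'⟩⟩
  · have h1' : (u.1 : ℕ) = 1 := by rw [h1]; rfl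
    have h2' : (v.1 : ℕ) = 0 := by rw [h2]; rfl
    right; right; exact ⟨by omega, Or.inr ⟨h1', h2'⟩⟩

def shiftv {n : ℕ} (p : Fin 2 × Fin (n + 1)) : Fin 2 × Fin (n + 2) := (p.1, p.2.succ)

lemma rtAdj_shift {n : ℕ} (u v : Fin 2 × Fin (n + 1)) :
    rtAdj (shiftv u) (shiftv v) ↔ rtAdj u v := by
  obtain ⟨r, c⟩ := u; obtain ⟨s, d⟩ := v
  simp only [rtAdj, gridAdj, shiftv, Fin.val_succ]
  push_cast
  have e : ((c : ℤ) + 1) - ((d : ℤ) + 1) = (c : ℤ) - (d : ℤ) := by ring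
  rw [e]
  constructor <;> rintro (h | ⟨h1, h2, h3⟩ | ⟨h1, h2, h3⟩)
  · exact Or.inl h
  · exact Or.inr (Or.inl ⟨h1, h2, by omega⟩)
  · exact Or.inr (Or.inr ⟨h1, h2, by omega⟩)
  · exact Or.inl h
  · exact Or.inr (Or.inl ⟨h1, h2, by omega⟩)
  · exact Or.inr (Or.inr ⟨h1, h2, by omega⟩)

lemma adj_vert {n : ℕ} : rtAdj ((0 : Fin 2), (0 : Fin (n + 1))) ((1 : Fin 2), (0 : Fin (n + 1))) := by
  left; unfold gridAdj; norm_num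

lemma adj_h0 {n : ℕ} :
    rtAdj ((0 : Fin 2), (0 : Fin (n + 2))) ((0 : Fin 2), Fin.succ (0 : Fin (n + 1))) := by
  left; unfold gridAdj; simp [Fin.val_succ]

lemma adj_h1 {n : ℕ} :
    rtAdj ((1 : Fin 2), (0 : Fin (n + 2))) ((1 : Fin 2), Fin.succ (0 : Fin (n + 1))) := by
  left; unfold gridAdj; simp [Fin.val_succ]

lemma adj_diag {n : ℕ} :
    rtAdj ((0 : Fin 2), (0 : Fin (n + 2))) ((1 : Fin 2), Fin.succ (0 : Fin (n + 1))) := by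
  right; left; exact ⟨rfl, rfl, by simp [Fin.val_succ]⟩

open Finset

lemma card_partition {α β : Type*} [Finite α] [Fintype β]
    (P : α → Prop) (g : α → β) :
    Nat.card {x // P x} = ∑ b : β, Nat.card {x : α // P x ∧ g x = b} := by
  classical
  cases nonempty_fintype α
  have e : {x // P x} ≃ Σ b : β, {x : α // P x ∧ g x = b} :=
    (Equiv.sigmaFiberEquiv (fun x : {x // P x} => g x.1)).symm.trans
      (Equiv.sigmaCongrRight fun b =>
        (Equiv.subtypeSubtypeEquivSubtypeInter P (fun x => g x = b)))
  rw [Nat.card_congr e, Nat.card_eq_fintype_card, Fintype.card_sigma]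
  exact Finset.sum_congr rfl fun b _ => (Nat.card_eq_fintype_card).symm

/-- Transfer compatibility between consecutive columns. -/
def Cmp (i j a b : Fin 3) : Bool :=
  decide ((i : ℕ) ≤ (j : ℕ) + 1 ∧ (j : ℕ) ≤ (i : ℕ) + 1 ∧
    (i : ℕ) ≤ (a : ℕ) + 1 ∧ (a : ℕ) ≤ (i : ℕ) + 1 ∧
    (j : ℕ) ≤ (b : ℕ) + 1 ∧ (b : ℕ) ≤ (j : ℕ) + 1 ∧
    (i : ℕ) ≤ (b : ℕ) + 1 ∧ (b : ℕ) ≤ (i : ℕ) + 1)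

lemma absle {x y : Fin 3} (h1 : (x : ℕ) ≤ (y : ℕ) + 1) (h2 : (y : ℕ) ≤ (x : ℕ) + 1) :
    |(x : ℤ) - (y : ℤ)| ≤ 1 := by
  rw [abs_le]; constructor <;> omega

/-- Extension of a word by a new first column with values `i, j`. -/
def extw {n : ℕ} (i j : Fin 3) (w' : Fin 2 × Fin (n + 1) → Fin 3)
    (p : Fin 2 × Fin (n + 2)) : Fin 3 :=
  Fin.cases (if p.1 = 0 then i else j) (fun c => w' (p.1, c)) p.2

@[simp] lemma extw_zero {n : ℕ} (i j : Fin 3) (w' : Fin 2 × Fin (n + 1) → Fin 3) (r : Fin 2) :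
    extw i j w' (r, 0) = if r = 0 then i else j := rfl

@[simp] lemma extw_succ {n : ℕ} (i j : Fin 3) (w' : Fin 2 × Fin (n + 1) → Fin 3) (r : Fin 2)
    (c : Fin (n + 1)) : extw i j w' (r, c.succ) = w' (r, c) := by
  simp [extw]

lemma base_card (i j : Fin 3) :
    Nat.card {w : Fin 2 × Fin 1 → Fin 3 //
      IsStaircase rtAdj w ∧ w (0, 0) = i ∧ w (1, 0) = j}
    = if (i : ℕ) ≤ (j : ℕ) + 1 ∧ (j : ℕ) ≤ (i : ℕ) + 1 then 1 else 0 := by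
  split_ifs with hC
  · haveI : Unique {w : Fin 2 × Fin 1 → Fin 3 //
        IsStaircase rtAdj w ∧ w (0, 0) = i ∧ w (1, 0) = j} := by
      refine ⟨⟨⟨fun p => if p.1 = 0 then i else j, ?_, by simp, by simp⟩⟩, ?_⟩
      · intro u v h
        rcases rtAdj_cases h with ⟨_, hne⟩ | ⟨hc, _⟩ | ⟨hc, _⟩
        · have hu := u.1.isLt; have hv := v.1.isLt
          by_cases h0 : u.1 = 0 <;> by_cases h1 : v.1 = 0 <;>
            simp [h0, h1] <;> first
              | exact absle hC.1 hC.2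
              | exact absle hC.2 hC.1
              | (exfalso; apply hne;
                 have : (u.1 : ℕ) ≠ 0 := fun he => h0 (Fin.ext he)
                 have : (v.1 : ℕ) ≠ 0 := fun he => h1 (Fin.ext he)
                 omega)
        · have := u.2.isLt; have := v.2.isLt; omega
        · have := u.2.isLt; have := v.2.isLt; omega
      · rintro ⟨w, hs, h1, h2⟩
        apply Subtype.ext
        funext p
        obtain ⟨r, c⟩ := p
        have hc : c = 0 := Subsingleton.elim c 0
        subst hc
        fin_cases r
        · simpa using h1
        · simpa using h2
    exact Nat.card_unique
  · rw [Nat.card_eq_zero]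
    left
    constructor
    rintro ⟨w, hs, h1, h2⟩
    have e1 := hs _ _ (adj_vert (n := 0))
    rw [h1, h2, abs_le] at e1
    apply hC
    constructor <;> omega


lemma fin2 (r : Fin 2) : r = 0 ∨ r = 1 := by
  rcases r with ⟨rv, hr⟩
  interval_cases rv
  · exact Or.inl rfl
  · exact Or.inr rfl

lemma fiber_card (n : ℕ) (i j a b : Fin 3) :
    Nat.card {w : Fin 2 × Fin (n + 2) → Fin 3 //
      IsStaircase rtAdj w ∧ w (0, 0) = i ∧ w (1, 0) = j ∧
        w (0, Fin.succ 0) = a ∧ w (1, Fin.succ 0) = b}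
    = if Cmp i j a b then
        Nat.card {w : Fin 2 × Fin (n + 1) → Fin 3 //
          IsStaircase rtAdj w ∧ w (0, 0) = a ∧ w (1, 0) = b}
      else 0 := by
  have e0 : ∀ i j : Fin 3, (if (0 : Fin 2) = 0 then i else j) = i := fun _ _ => if_pos rfl
  have e1 : ∀ i j : Fin 3, (if (1 : Fin 2) = 0 then i else j) = j := fun _ _ => if_neg (by decide)
  split_ifs with hC
  · rw [Cmp, decide_eq_true_eq] at hC
    obtain ⟨c1, c2, c3, c4, c5, c6, c7, c8⟩ := hC
    refine Nat.card_congr ⟨?_, ?_, ?_, ?_⟩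
    · rintro ⟨w, hs, h1, h2, h3, h4⟩
      exact ⟨fun p => w (shiftv p),
        fun u v h => hs (shiftv u) (shiftv v) ((rtAdj_shift u v).mpr h), h3, h4⟩
    · rintro ⟨w', hs', h1', h2'⟩
      refine ⟨extw i j w', ?_, by simp [extw], by simp [extw], (extw_succ i j w' 0 0).trans h1',
        (extw_succ i j w' 1 0).trans h2'⟩
      rintro ⟨r, c⟩ ⟨s, d⟩ h
      rcases Fin.eq_zero_or_eq_succ c with hc | ⟨c', hc⟩ <;>
        rcases Fin.eq_zero_or_eq_succ d with hd | ⟨d', hd⟩ <;> subst hc <;> subst hd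
      · -- both in column 0
        rcases rtAdj_cases h with ⟨_, hne⟩ | ⟨hcol, _⟩ | ⟨hcol, _⟩
        · simp only [extw_zero]
          rcases fin2 r with h0 | h0 <;> subst h0 <;>
            rcases fin2 s with hh1 | hh1 <;> subst hh1
          · exfalso; exact hne rfl
          · rw [e0, e1]; exact absle c1 c2
          · rw [e0, e1]; exact absle c2 c1
          · exfalso; exact hne rfl
        · exfalso; simp at hcol; try omega
        · exfalso; simp at hcol; try omega
      · -- u in column 0, v in column 1
        rcases rtAdj_cases h with ⟨hcol, _⟩ | ⟨hcol, hrow⟩ | ⟨hcol, _⟩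
        · exfalso; simp at hcol; try omega
        · have hd0 : d' = 0 := Fin.ext (by simp at hcol ⊢; omega)
          subst hd0
          simp only [extw_zero, extw_succ]
          rcases fin2 r with h0 | h0 <;> subst h0 <;>
            rcases fin2 s with hh1 | hh1 <;> subst hh1
          · rw [e0, h1']; exact absle c3 c4
          · rw [e0, h2']; exact absle c7 c8
          · exfalso; simp at hrow
          · rw [e1, h2']; exact absle c5 c6
        · exfalso; simp at hcol; try omega
      · -- u in column 1, v in column 0
        rcases rtAdj_cases h with ⟨hcol, _⟩ | ⟨hcol, _⟩ | ⟨hcol, hrow⟩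
        · exfalso; simp at hcol; try omega
        · exfalso; simp at hcol; try omega
        · have hc0 : c' = 0 := Fin.ext (by simp at hcol ⊢; omega)
          subst hc0
          simp only [extw_zero, extw_succ]
          rcases fin2 r with h0 | h0 <;> subst h0 <;>
            rcases fin2 s with hh1 | hh1 <;> subst hh1
          · rw [e0, h1']; exact absle c4 c3
          · exfalso; simp at hrow
          · simp only [e0]; rw [h2']; exact absle c8 c7
          · rw [e1, h2']; exact absle c6 c5
      · -- both in columns ≥ 1
        simp only [extw_succ]
        exact hs' (r, c') (s, d') ((rtAdj_shift (r, c') (s, d')).mp h)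
    · rintro ⟨w, hs, h1, h2, h3, h4⟩
      apply Subtype.ext
      funext p
      obtain ⟨r, c⟩ := p
      rcases Fin.eq_zero_or_eq_succ c with hc | ⟨c', hc⟩ <;> subst hc
      · rcases fin2 r with h0 | h0 <;> subst h0
        · simp only [extw_zero, e0]; exact h1.symm
        · simp only [extw_zero, e1]; exact h2.symm
      · simp only [extw_succ]; rfl
    · rintro ⟨w', hs', h1', h2'⟩
      apply Subtype.ext
      funext p
      obtain ⟨r, c⟩ := p
      exact extw_succ i j w' r c
  · rw [Nat.card_eq_zero]
    left
    constructor
    rintro ⟨w, hs, h1, h2, h3, h4⟩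
    have e1 := hs _ _ (adj_vert (n := n + 1))
    have e2 := hs _ _ (adj_h0 (n := n))
    have e3 := hs _ _ (adj_h1 (n := n))
    have e4 := hs _ _ (adj_diag (n := n))
    rw [h1, h2, abs_le] at e1
    rw [h1, h3, abs_le] at e2
    rw [h2, h4, abs_le] at e3
    rw [h1, h4, abs_le] at e4
    rw [Cmp, decide_eq_true_eq] at hC
    apply hC
    refine ⟨?_, ?_, ?_, ?_, ?_, ?_, ?_, ?_⟩ <;> omega

def gvec : ℕ → Fin 3 → Fin 3 → ℕ
  | 0, i, j => if (i : ℕ) ≤ (j : ℕ) + 1 ∧ (j : ℕ) ≤ (i : ℕ) + 1 then 1 else 0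
  | n + 1, i, j => ∑ p : Fin 3 × Fin 3, if Cmp i j p.1 p.2 then gvec n p.1 p.2 else 0

lemma N_eq : ∀ (n : ℕ) (i j : Fin 3),
    Nat.card {w : Fin 2 × Fin (n + 1) → Fin 3 //
      IsStaircase rtAdj w ∧ w (0, 0) = i ∧ w (1, 0) = j} = gvec n i j := by
  intro n
  induction n with
  | zero => intro i j; simpa [gvec] using base_card i j
  | succ n ih =>
    intro i j
    rw [card_partition _ (fun w => (w (0, Fin.succ 0), w (1, Fin.succ 0)))]
    show _ = ∑ p : Fin 3 × Fin 3, if Cmp i j p.1 p.2 then gvec n p.1 p.2 else 0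
    refine Finset.sum_congr rfl fun p _ => ?_
    rw [← ih p.1 p.2, ← fiber_card n i j p.1 p.2]
    apply Nat.card_congr
    apply Equiv.subtypeEquivRight
    intro w
    constructor
    · rintro ⟨⟨hs, h1, h2⟩, hp⟩
      exact ⟨hs, h1, h2, congrArg Prod.fst hp, congrArg Prod.snd hp⟩
    · rintro ⟨hs, h1, h2, h3, h4⟩
      exact ⟨⟨hs, h1, h2⟩, Prod.ext h3 h4⟩

lemma scount_eq (n : ℕ) : scount 3 (n + 1) rtAdj = ∑ p : Fin 3 × Fin 3, gvec n p.1 p.2 := by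
  unfold scount
  rw [card_partition _ (fun w => (w (0, 0), w (1, 0)))]
  refine Finset.sum_congr rfl fun p _ => ?_
  rw [← N_eq n p.1 p.2]
  apply Nat.card_congr
  apply Equiv.subtypeEquivRight
  intro w
  constructor
  · rintro ⟨hs, hp⟩
    exact ⟨hs, congrArg Prod.fst hp, congrArg Prod.snd hp⟩
  · rintro ⟨hs, h1, h2⟩
    exact ⟨hs, Prod.ext h1 h2⟩

lemma gvec_rec : ∀ (n : ℕ) (i j : Fin 3),
    gvec (n + 3) i j = 4 * gvec (n + 2) i j + 4 * gvec (n + 1) i j + gvec n i j := by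
  intro n
  induction n with
  | zero => decide
  | succ n ih =>
    intro i j
    have step : gvec (n + 1 + 3) i j
        = ∑ p : Fin 3 × Fin 3, (4 * (if Cmp i j p.1 p.2 then gvec (n + 2) p.1 p.2 else 0)
            + 4 * (if Cmp i j p.1 p.2 then gvec (n + 1) p.1 p.2 else 0)
            + (if Cmp i j p.1 p.2 then gvec n p.1 p.2 else 0)) := by
      show (∑ p : Fin 3 × Fin 3, if Cmp i j p.1 p.2 then gvec (n + 3) p.1 p.2 else 0) = _
      refine Finset.sum_congr rfl fun p _ => ?_
      by_cases h : Cmp i j p.1 p.2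
      · simp only [h, if_true, ih p.1 p.2]; try ring
      · simp [h]
    rw [step, Finset.sum_add_distrib, Finset.sum_add_distrib,
      ← Finset.mul_sum, ← Finset.mul_sum]
    rfl

theorem rt_k3_recurrence :
    scount 3 1 rtAdj = 7 ∧ scount 3 2 rtAdj = 33 ∧ scount 3 3 rtAdj = 161 ∧
      ∀ n : ℕ, 1 ≤ n →
        scount 3 (n + 3) rtAdj =
          4 * scount 3 (n + 2) rtAdj + 4 * scount 3 (n + 1) rtAdj + scount 3 n rtAdj := by
  have s1 := scount_eq 0
  have s2 := scount_eq 1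
  have s3 := scount_eq 2
  norm_num at s1 s2 s3
  refine ⟨by rw [s1]; decide, by rw [s2]; decide, by rw [s3]; decide, ?_⟩
  intro n hn
  obtain ⟨m, rfl⟩ : ∃ m, n = m + 1 := ⟨n - 1, by omega⟩
  have e3 : m + 1 + 3 = (m + 3) + 1 := by omega
  have e2 : m + 1 + 2 = (m + 2) + 1 := by omega
  rw [e3, e2]
  simp only [scount_eq]
  rw [Finset.sum_congr rfl fun p _ => gvec_rec m p.1 p.2]
  rw [Finset.sum_add_distrib, Finset.sum_add_distrib, ← Finset.mul_sum, ← Finset.mul_sum]
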